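/- Let ρ̂ ∈ 𝒮(ℝ³, ℂ) be not identically zero and compactly supported, and define N(ρ̂, ε)² = (2π)^{-3} ∫ (2E_p)^{-1} |ρ̂(εp)|² d³p with E_p = √(m²+|p|²), m > 0. Then for all ε ∈ (0,1], N(ρ̂, ε)² is finite and positive, and there exist constants 0 < c ≤ C with c/ε² ≤ N(ρ̂, ε)² ≤ C/ε², i.e. N(ρ̂, ε) = Θ(1/ε) as ε → 0⁺. -/

import Mathlib

open MeasureTheory

open MeasureTheory Real Set

noncomputable section

namespace Stmt11Aux

abbrev E3 := EuclideanSpace ℝ (Fin 3)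

lemma coord_abs_le_norm (s : E3) (i : Fin 3) : |s i| ≤ ‖s‖ := by
  rw [EuclideanSpace.norm_eq, ← Real.sqrt_sq_eq_abs]
  apply Real.sqrt_le_sqrt
  have := Finset.single_le_sum (f := fun j => ‖s j‖ ^ 2)
    (fun j _ => by positivity) (Finset.mem_univ i)
  simpa [Real.norm_eq_abs, sq_abs] using this

lemma intervalIntegrable_abs_rpow {r : ℝ} (hr : -1 < r) (a : ℝ) :
    IntervalIntegrable (fun t : ℝ => |t| ^ r) volume 0 a := by
  have key : ∀ b : ℝ, 0 ≤ b → IntervalIntegrable (fun t : ℝ => |t| ^ r) volume 0 b := by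
    intro b hb
    rw [intervalIntegrable_iff_integrableOn_Ioc_of_le hb]
    refine ((intervalIntegrable_iff_integrableOn_Ioc_of_le hb).1
      (intervalIntegral.intervalIntegrable_rpow' hr)).congr_fun ?_ measurableSet_Ioc
    intro t ht
    show t ^ r = |t| ^ r
    rw [abs_of_pos ht.1]
  rcases le_total 0 a with ha | ha
  · exact key a ha
  · have h2 := key (-a) (by linarith)
    rw [IntervalIntegrable.iff_comp_neg] at h2
    simpa using h2

lemma integrable_indicator_abs_rpow (R : ℝ) (hR : 0 ≤ R) :
    Integrable ((Icc (-R) R).indicator (fun t : ℝ => |t| ^ (-(3:ℝ)⁻¹))) volume := by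
  rw [integrable_indicator_iff measurableSet_Icc]
  have h1 : IntervalIntegrable (fun t : ℝ => |t| ^ (-(3:ℝ)⁻¹)) volume (-R) R :=
    ((intervalIntegrable_abs_rpow (by norm_num) (-R)).symm.trans
      (intervalIntegrable_abs_rpow (by norm_num) R))
  have h2 : IntegrableOn (fun t : ℝ => |t| ^ (-(3:ℝ)⁻¹)) (Ioc (-R) R) volume :=
    (intervalIntegrable_iff_integrableOn_Ioc_of_le (by linarith)).1 h1
  exact h2.congr_set_ae Ioc_ae_eq_Icc.symm

lemma coord_hyperplane_null (i : Fin 3) : (volume : Measure E3) {s : E3 | s i = 0} = 0 := by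
  have hT := EuclideanSpace.volume_preserving_symm_measurableEquiv_toLp (Fin 3)
  have hs : MeasurableSet {x : Fin 3 → ℝ | x i = 0} :=
    (measurable_pi_apply i) (measurableSet_singleton 0)
  have hp : (volume : Measure (Fin 3 → ℝ)) {x | x i = 0} = 0 := by
    rw [volume_pi]
    exact Measure.pi_hyperplane _ i 0
  have : {s : E3 | s i = 0} =
      (MeasurableEquiv.toLp 2 (Fin 3 → ℝ)).symm ⁻¹' {x : Fin 3 → ℝ | x i = 0} := rfl
  rw [this, hT.measure_preimage hs.nullMeasurableSet, hp]

lemma integrable_inv_norm_mul {R M : ℝ} (hR : 0 ≤ R) (φ : E3 → ℝ)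
    (hφm : AEStronglyMeasurable φ volume)
    (hφ0 : ∀ s, 0 ≤ φ s) (hφM : ∀ s, φ s ≤ M)
    (hsupp : ∀ s : E3, R < ‖s‖ → φ s = 0) :
    Integrable (fun s : E3 => ‖s‖⁻¹ * φ s) volume := by
  set h : ℝ → ℝ := (Icc (-R) R).indicator (fun t : ℝ => |t| ^ (-(3:ℝ)⁻¹)) with hh_def
  have hM : 0 ≤ M := le_trans (hφ0 0) (hφM 0)
  have hh0 : ∀ t, 0 ≤ h t :=
    fun t => Set.indicator_nonneg (fun t _ => Real.rpow_nonneg (abs_nonneg t) _) t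
  have hG : Integrable (fun x : Fin 3 → ℝ => ∏ i, h (x i)) volume :=
    Integrable.fintype_prod (fun _ => integrable_indicator_abs_rpow R hR)
  have hG' : Integrable (fun s : E3 => M * ∏ i, h (s i)) volume := by
    have hT := EuclideanSpace.volume_preserving_symm_measurableEquiv_toLp (Fin 3)
    rw [← MeasurePreserving.integrable_comp_emb hT
      (MeasurableEquiv.measurableEmbedding _)] at hG
    exact hG.const_mul M
  refine hG'.mono' (measurable_norm.inv.aestronglyMeasurable.mul hφm) ?_
  have hae : ∀ᵐ s : E3, ∀ i : Fin 3, s i ≠ 0 := by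
    rw [ae_all_iff]
    intro i
    rw [ae_iff]
    have : {s : E3 | ¬ s i ≠ 0} = {s : E3 | s i = 0} := by ext s; simp
    rw [this]
    exact coord_hyperplane_null i
  filter_upwards [hae] with s hs
  have hRHS0 : 0 ≤ ∏ i, h (s i) := Finset.prod_nonneg fun i _ => hh0 _
  rcases lt_or_ge R ‖s‖ with hsR | hsR
  · rw [hsupp s hsR, mul_zero, norm_zero]
    positivity
  · have hs0 : s ≠ 0 := by
      intro h0
      exact hs 0 (by rw [h0]; rfl)
    have hns : 0 < ‖s‖ := norm_pos_iff.2 hs0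
    have hcoord : ∀ i, s i ∈ Icc (-R) R := by
      intro i
      have h1 := coord_abs_le_norm s i
      have h2 := abs_le.1 (h1.trans hsR)
      exact ⟨h2.1, h2.2⟩
    have hprodpos : 0 < ∏ i : Fin 3, |s i| :=
      Finset.prod_pos fun i _ => abs_pos.2 (hs i)
    have hple : (∏ i : Fin 3, |s i|) ≤ ‖s‖ ^ (3:ℕ) := by
      calc ∏ i : Fin 3, |s i| ≤ ∏ _i : Fin 3, ‖s‖ :=
            Finset.prod_le_prod (fun i _ => abs_nonneg _) (fun i _ => coord_abs_le_norm s i)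
        _ = ‖s‖ ^ (3:ℕ) := by simp
    have hkey : ‖s‖⁻¹ ≤ ∏ i, h (s i) := by
      have h1 : ∀ i : Fin 3, h (s i) = |s i| ^ (-(3:ℝ)⁻¹) :=
        fun i => Set.indicator_of_mem (hcoord i) _
      calc ‖s‖⁻¹ = (‖s‖ ^ (3:ℕ)) ^ (-(3:ℝ)⁻¹) := by
            rw [← Real.rpow_natCast ‖s‖ 3, ← Real.rpow_mul (norm_nonneg s)]
            norm_num [Real.rpow_neg_one]
        _ ≤ (∏ i : Fin 3, |s i|) ^ (-(3:ℝ)⁻¹) :=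
            Real.rpow_le_rpow_of_nonpos hprodpos hple (by norm_num)
        _ = ∏ i : Fin 3, |s i| ^ (-(3:ℝ)⁻¹) := by
            rw [← Real.finset_prod_rpow _ _ (fun i _ => abs_nonneg _)]
        _ = ∏ i, h (s i) := by
            exact (Finset.prod_congr rfl fun i _ => (h1 i).symm)
    have : ‖‖s‖⁻¹ * φ s‖ = ‖s‖⁻¹ * φ s := by
      rw [Real.norm_eq_abs, abs_of_nonneg (mul_nonneg (inv_nonneg.2 (norm_nonneg s)) (hφ0 s))]
    rw [this]
    calc ‖s‖⁻¹ * φ s ≤ (∏ i, h (s i)) * M :=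
          mul_le_mul hkey (hφM s) (hφ0 s) hRHS0
      _ = M * ∏ i, h (s i) := mul_comm _ _

end Stmt11Aux

end


/-- The regularized squared norm
`N(ρ̂, ε)² = (2π)^{-3} ∫ (2E_p)^{-1} |ρ̂(εp)|² d³p`, `E_p = √(m² + |p|²)`,
of the embedded one-particle state: for `ρ̂` Schwartz, compactly supported and
not identically zero, it is finite and positive, with two-sided bounds
`c/ε² ≤ N(ρ̂, ε)² ≤ C/ε²` for `ε ∈ (0,1]`, i.e. `N(ρ̂, ε) = Θ(1/ε)`. -/
theorem stmt_11 (m : ℝ) (hm : 0 < m)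
    (ρhat : SchwartzMap (EuclideanSpace ℝ (Fin 3)) ℂ)
    (hcs : HasCompactSupport (ρhat : EuclideanSpace ℝ (Fin 3) → ℂ))
    (hne : ρhat ≠ 0) :
    ∃ c C : ℝ, 0 < c ∧ c ≤ C ∧ ∀ ε ∈ Set.Ioc (0 : ℝ) 1,
      c / ε ^ 2 ≤
        ((2 * Real.pi) ^ 3)⁻¹ *
          (∫ p : EuclideanSpace ℝ (Fin 3),
            (2 * Real.sqrt (m ^ 2 + ‖p‖ ^ 2))⁻¹ * ‖ρhat (ε • p)‖ ^ 2) ∧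
      ((2 * Real.pi) ^ 3)⁻¹ *
          (∫ p : EuclideanSpace ℝ (Fin 3),
            (2 * Real.sqrt (m ^ 2 + ‖p‖ ^ 2))⁻¹ * ‖ρhat (ε • p)‖ ^ 2)
        ≤ C / ε ^ 2 := by
  classical
  set φ : EuclideanSpace ℝ (Fin 3) → ℝ := fun s => ‖ρhat s‖ ^ 2 with hφ_def
  have hφcont : Continuous φ := (ρhat.continuous.norm).pow 2
  have hφc : HasCompactSupport φ := hcs.comp_left (g := fun y : ℂ => ‖y‖ ^ 2) (by simp)
  have hφ0 : ∀ s, 0 ≤ φ s := fun s => by positivity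
  obtain ⟨M, hM⟩ := hφc.exists_bound_of_continuous hφcont
  have hφM : ∀ s, φ s ≤ M := fun s => (le_abs_self _).trans
    (by simpa [Real.norm_eq_abs] using hM s)
  obtain ⟨R0, hR0⟩ := hφc.isBounded.subset_closedBall 0
  set R := max R0 0 with hR_def
  have hR : 0 ≤ R := le_max_right _ _
  have hsupp : ∀ s, R < ‖s‖ → φ s = 0 := by
    intro s hs
    apply image_eq_zero_of_notMem_tsupport
    intro hmem
    have h1 := hR0 hmem
    rw [Metric.mem_closedBall, dist_zero_right] at h1
    have h2 : ‖s‖ ≤ R := h1.trans (le_max_left _ _)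
    linarith
  set A : EuclideanSpace ℝ (Fin 3) → ℝ := fun s => (2 * (m + ‖s‖))⁻¹ * φ s with hA_def
  have hApos_fac : ∀ s : EuclideanSpace ℝ (Fin 3), 0 < 2 * (m + ‖s‖) := fun s => by positivity
  have hAc : Continuous A :=
    ((continuous_const.mul (continuous_const.add continuous_norm)).inv₀
      (fun s => (hApos_fac s).ne')).mul hφcont
  have hAsupp : HasCompactSupport A := hφc.mul_left
  have hA : Integrable A volume := hAc.integrable_of_hasCompactSupport hAsupp
  have hB : Integrable (fun s : EuclideanSpace ℝ (Fin 3) => ‖s‖⁻¹ * φ s) volume :=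
    Stmt11Aux.integrable_inv_norm_mul hR φ hφcont.aestronglyMeasurable hφ0 hφM hsupp
  set c₀ := ∫ s, A s with hc₀
  set C₀ := ∫ s : EuclideanSpace ℝ (Fin 3), ‖s‖⁻¹ * φ s with hC₀
  have hA0 : ∀ s, 0 ≤ A s := fun s => mul_nonneg (inv_nonneg.2 (hApos_fac s).le) (hφ0 s)
  have hc₀pos : 0 < c₀ := by
    rw [hc₀, integral_pos_iff_support_of_nonneg hA0 hA]
    have hsub : Function.support φ ⊆ Function.support A := by
      intro s hsφ
      simp only [Function.mem_support] at *
      exact mul_ne_zero (inv_ne_zero (hApos_fac s).ne') hsφ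
    have hopen : IsOpen (Function.support φ) := hφcont.isOpen_support
    have hne' : (Function.support φ).Nonempty := by
      obtain ⟨x, hx⟩ : ∃ x, ρhat x ≠ 0 := by
        by_contra hall
        push_neg at hall
        exact hne (SchwartzMap.ext fun x => by simpa using hall x)
      exact ⟨x, by simp [hφ_def, hx]⟩
    exact lt_of_lt_of_le (hopen.measure_pos volume hne') (measure_mono hsub)
  have h0ae : ∀ᵐ s : EuclideanSpace ℝ (Fin 3), s ≠ 0 := by
    rw [ae_iff]
    have : {s : EuclideanSpace ℝ (Fin 3) | ¬ s ≠ 0} = {0} := by ext s; simp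
    rw [this]
    exact measure_singleton 0
  have hc₀C₀ : c₀ ≤ C₀ := by
    refine integral_mono_ae hA hB ?_
    filter_upwards [h0ae] with s hs
    have hns : 0 < ‖s‖ := norm_pos_iff.2 hs
    have hinv : (2 * (m + ‖s‖))⁻¹ ≤ ‖s‖⁻¹ := by
      apply inv_anti₀ hns
      nlinarith [norm_nonneg s]
    exact mul_le_mul_of_nonneg_right hinv (hφ0 s)
  refine ⟨((2 * Real.pi) ^ 3)⁻¹ * c₀, ((2 * Real.pi) ^ 3)⁻¹ * C₀,
    mul_pos (by positivity) hc₀pos,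
    mul_le_mul_of_nonneg_left hc₀C₀ (by positivity), ?_⟩
  rintro ε ⟨hε0, hε1⟩
  set F : EuclideanSpace ℝ (Fin 3) → ℝ :=
    fun s => (2 * Real.sqrt (m ^ 2 + ‖(ε⁻¹ : ℝ) • s‖ ^ 2))⁻¹ * φ s with hF_def
  have hsq : ∀ s : EuclideanSpace ℝ (Fin 3),
      0 < Real.sqrt (m ^ 2 + ‖(ε⁻¹ : ℝ) • s‖ ^ 2) :=
    fun s => Real.sqrt_pos.2 (by positivity)
  have hInt_eq : (fun p : EuclideanSpace ℝ (Fin 3) =>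
      (2 * Real.sqrt (m ^ 2 + ‖p‖ ^ 2))⁻¹ * ‖ρhat (ε • p)‖ ^ 2) = fun p => F (ε • p) := by
    funext p
    have hp : (ε⁻¹ : ℝ) • (ε • p) = p := by
      rw [smul_smul, inv_mul_cancel₀ hε0.ne', one_smul]
    simp only [hF_def, hφ_def, hp]
  have hchange : ∫ p, F (ε • p) = |((ε:ℝ) ^ (3:ℕ))⁻¹| • ∫ s, F s := by
    have h := MeasureTheory.Measure.integral_comp_smul
      (volume : Measure (EuclideanSpace ℝ (Fin 3))) F ε
    rwa [finrank_euclideanSpace_fin] at h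
  have hFc : Continuous F := by
    refine Continuous.mul (Continuous.inv₀ ?_ ?_) hφcont
    · exact continuous_const.mul (Real.continuous_sqrt.comp
        (continuous_const.add (((continuous_id.const_smul (ε⁻¹:ℝ)).norm).pow 2)))
    · exact fun s => mul_ne_zero two_ne_zero (hsq s).ne'
  have hFsupp : HasCompactSupport F := hφc.mul_left
  have hF : Integrable F volume := hFc.integrable_of_hasCompactSupport hFsupp
  have hεinv : 1 ≤ (ε⁻¹ : ℝ) := by
    nlinarith [mul_inv_cancel₀ hε0.ne', inv_pos.2 hε0]
  have hlow : ∀ s, ε * A s ≤ F s := by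
    intro s
    have hnorm : ‖(ε⁻¹ : ℝ) • s‖ = ε⁻¹ * ‖s‖ := by
      rw [norm_smul, Real.norm_eq_abs, abs_of_pos (inv_pos.2 hε0)]
    have hsqle : Real.sqrt (m ^ 2 + ‖(ε⁻¹ : ℝ) • s‖ ^ 2) ≤ ε⁻¹ * (m + ‖s‖) := by
      rw [hnorm, ← Real.sqrt_sq (by positivity : (0:ℝ) ≤ ε⁻¹ * (m + ‖s‖))]
      apply Real.sqrt_le_sqrt
      have h1 : 1 ≤ ε⁻¹ * ε⁻¹ := by nlinarith [hεinv]
      have h2 : m ^ 2 ≤ ε⁻¹ * ε⁻¹ * m ^ 2 := le_mul_of_one_le_left (sq_nonneg m) h1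
      have h3 : 0 ≤ ε⁻¹ * ε⁻¹ * (m * ‖s‖) := by positivity
      nlinarith [norm_nonneg s, hm.le]
    have hstep : (2 * (ε⁻¹ * (m + ‖s‖)))⁻¹ ≤
        (2 * Real.sqrt (m ^ 2 + ‖(ε⁻¹ : ℝ) • s‖ ^ 2))⁻¹ := by
      apply inv_anti₀ (mul_pos two_pos (hsq s))
      linarith
    have heq : ε * (2 * (m + ‖s‖))⁻¹ = (2 * (ε⁻¹ * (m + ‖s‖)))⁻¹ := by
      have h1 : (m + ‖s‖) ≠ 0 := by positivity
      field_simp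
    calc ε * A s = (ε * (2 * (m + ‖s‖))⁻¹) * φ s := by rw [hA_def]; ring
      _ ≤ (2 * Real.sqrt (m ^ 2 + ‖(ε⁻¹ : ℝ) • s‖ ^ 2))⁻¹ * φ s :=
          mul_le_mul_of_nonneg_right (heq ▸ hstep) (hφ0 s)
      _ = F s := rfl
  have hup : ∀ᵐ s : EuclideanSpace ℝ (Fin 3), F s ≤ ε * (‖s‖⁻¹ * φ s) := by
    filter_upwards [h0ae] with s hs
    have hns : 0 < ‖s‖ := norm_pos_iff.2 hs
    have hnorm : ‖(ε⁻¹ : ℝ) • s‖ = ε⁻¹ * ‖s‖ := by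
      rw [norm_smul, Real.norm_eq_abs, abs_of_pos (inv_pos.2 hε0)]
    have hsqge : ε⁻¹ * ‖s‖ ≤ Real.sqrt (m ^ 2 + ‖(ε⁻¹ : ℝ) • s‖ ^ 2) := by
      rw [← Real.sqrt_sq (by positivity : (0:ℝ) ≤ ε⁻¹ * ‖s‖)]
      apply Real.sqrt_le_sqrt
      rw [hnorm]
      nlinarith [sq_nonneg m]
    have hstep : (2 * Real.sqrt (m ^ 2 + ‖(ε⁻¹ : ℝ) • s‖ ^ 2))⁻¹ ≤
        (2 * (ε⁻¹ * ‖s‖))⁻¹ := by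
      apply inv_anti₀ (by positivity)
      linarith
    have heq2 : (2 * (ε⁻¹ * ‖s‖))⁻¹ ≤ ε * ‖s‖⁻¹ := by
      rw [show (2 * (ε⁻¹ * ‖s‖)) = ε⁻¹ * (2 * ‖s‖) by ring, mul_inv, inv_inv]
      apply mul_le_mul_of_nonneg_left _ hε0.le
      apply inv_anti₀ hns
      linarith
    calc F s ≤ (2 * (ε⁻¹ * ‖s‖))⁻¹ * φ s := mul_le_mul_of_nonneg_right hstep (hφ0 s)
      _ ≤ (ε * ‖s‖⁻¹) * φ s := mul_le_mul_of_nonneg_right heq2 (hφ0 s)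
      _ = ε * (‖s‖⁻¹ * φ s) := by ring
  have hint1 : ε * c₀ ≤ ∫ s, F s := by
    have h := integral_mono (hA.const_mul ε) hF hlow
    rwa [integral_const_mul] at h
  have hint2 : (∫ s, F s) ≤ ε * C₀ := by
    have h := integral_mono_ae hF (hB.const_mul ε) hup
    rwa [integral_const_mul] at h
  rw [hInt_eq, hchange]
  have hε3 : |((ε:ℝ) ^ (3:ℕ))⁻¹| = ((ε:ℝ) ^ (3:ℕ))⁻¹ := abs_of_pos (by positivity)
  rw [hε3, smul_eq_mul]
  constructor
  · have key : c₀ / ε ^ 2 ≤ (ε ^ 3)⁻¹ * ∫ s, F s := by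
      rw [div_le_iff₀ (by positivity : (0:ℝ) < ε ^ 2)]
      calc c₀ = (ε ^ 3)⁻¹ * (ε * c₀) * ε ^ 2 := by field_simp
        _ ≤ (ε ^ 3)⁻¹ * (∫ s, F s) * ε ^ 2 := by
            apply mul_le_mul_of_nonneg_right _ (by positivity)
            exact mul_le_mul_of_nonneg_left hint1 (by positivity)
    calc ((2 * Real.pi) ^ 3)⁻¹ * c₀ / ε ^ 2
        = ((2 * Real.pi) ^ 3)⁻¹ * (c₀ / ε ^ 2) := by ring
      _ ≤ ((2 * Real.pi) ^ 3)⁻¹ * ((ε ^ 3)⁻¹ * ∫ s, F s) :=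
          mul_le_mul_of_nonneg_left key (by positivity)
  · have key : (ε ^ 3)⁻¹ * (∫ s, F s) ≤ C₀ / ε ^ 2 := by
      rw [le_div_iff₀ (by positivity : (0:ℝ) < ε ^ 2)]
      calc (ε ^ 3)⁻¹ * (∫ s, F s) * ε ^ 2 ≤ (ε ^ 3)⁻¹ * (ε * C₀) * ε ^ 2 := by
            apply mul_le_mul_of_nonneg_right _ (by positivity)
            exact mul_le_mul_of_nonneg_left hint2 (by positivity)
        _ = C₀ := by field_simp
    calc ((2 * Real.pi) ^ 3)⁻¹ * ((ε ^ 3)⁻¹ * ∫ s, F s)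
        ≤ ((2 * Real.pi) ^ 3)⁻¹ * (C₀ / ε ^ 2) :=
          mul_le_mul_of_nonneg_left key (by positivity)
      _ = ((2 * Real.pi) ^ 3)⁻¹ * C₀ / ε ^ 2 := by ring
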